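/- For all real α with Re α > 0 and q with |arg q| < π/4, the Laplace transform identity ∫₀^∞ (1 - erf(q/(2√t))) e^{-αt} dt = (1/α) e^{-q√α} holds, where erf(x) = (2/√π) ∫₀^x e^{-z²} dz. -/

import Mathlib

open MeasureTheory Real Set

-- integrability of gaussian on sets
lemma int_gauss_on (s : Set ℝ) : IntegrableOn (fun z : ℝ => Real.exp (-z ^ 2)) s := by
  have h := integrable_exp_neg_mul_sq (b := 1) one_pos
  simpa using h.integrableOn

lemma gauss_Ioi_zero : ∫ z in Ioi (0:ℝ), Real.exp (-z ^ 2) = Real.sqrt π / 2 := by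
  have h := integral_gaussian_Ioi 1
  simpa using h

lemma one_sub_erf (x : ℝ) (hx : 0 ≤ x) :
    1 - (2 / Real.sqrt π) * ∫ z in (0:ℝ)..x, Real.exp (-z ^ 2)
      = (2 / Real.sqrt π) * ∫ z in Ioi x, Real.exp (-z ^ 2) := by
  have hsplit : (∫ z in Ioc (0:ℝ) x, Real.exp (-z ^ 2)) + ∫ z in Ioi x, Real.exp (-z ^ 2)
      = ∫ z in Ioi (0:ℝ), Real.exp (-z ^ 2) := by
    rw [← setIntegral_union (Ioc_disjoint_Ioi le_rfl) measurableSet_Ioi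
      (int_gauss_on _) (int_gauss_on _), Ioc_union_Ioi_eq_Ioi hx]
  have h1 : (∫ z in (0:ℝ)..x, Real.exp (-z ^ 2)) = ∫ z in Ioc (0:ℝ) x, Real.exp (-z ^ 2) := by
    rw [intervalIntegral.integral_of_le hx]
  have hπ : Real.sqrt π ≠ 0 := by positivity
  rw [h1]
  have := hsplit
  rw [gauss_Ioi_zero] at this
  field_simp
  linarith [this]

lemma exp_int_Ioi (α : ℝ) (hα : 0 < α) (c : ℝ) :
    ∫ t in Ioi c, Real.exp (-α * t) = Real.exp (-α * c) / α := by
  have h : ∀ t ∈ Ici c, HasDerivAt (fun t => -Real.exp (-α * t) / α) (Real.exp (-α * t)) t := by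
    intro t _
    have : HasDerivAt (fun t : ℝ => -α * t) (-α) t := by
      simpa using (hasDerivAt_id t).const_mul (-α)
    have := (this.exp.neg).div_const α
    refine this.congr_deriv ?_
    field_simp
  have htend : Filter.Tendsto (fun t => -Real.exp (-α * t) / α) Filter.atTop (nhds 0) := by
    have : Filter.Tendsto (fun t : ℝ => -α * t) Filter.atTop Filter.atBot :=
      Filter.tendsto_id.const_mul_atTop_of_neg (by linarith)
    have := (Real.tendsto_exp_atBot.comp this).neg.div_const α
    simpa using this
  have := MeasureTheory.integral_Ioi_of_hasDerivAt_of_tendsto' h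
    ((exp_neg_integrableOn_Ioi c hα)) htend
  rw [this]; ring


lemma glasser_h_integrable (c : ℝ) :
    IntegrableOn (fun z : ℝ => Real.exp (-(z ^ 2 + c ^ 2 / z ^ 2))) (Ioi 0) := by
  refine (int_gauss_on (Ioi 0)).mono' ?_ ?_
  · refine (Measurable.aestronglyMeasurable ?_).restrict
    measurability
  · filter_upwards [ae_restrict_mem measurableSet_Ioi] with z hz
    rw [Real.norm_eq_abs, abs_of_pos (Real.exp_pos _)]
    apply Real.exp_le_exp.2
    have : 0 ≤ c ^ 2 / z ^ 2 := by positivity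
    linarith

lemma glasser_sub2_deriv (c : ℝ) (hc : 0 < c) :
    ∀ z ∈ Ioi (0:ℝ), HasDerivWithinAt (fun z : ℝ => c / z) (-(c / z ^ 2)) (Ioi 0) z := by
  intro z hz
  have h1 : HasDerivAt (fun z : ℝ => c / z) (c * (-(z ^ 2)⁻¹)) z := by
    simpa [div_eq_mul_inv] using (hasDerivAt_inv (ne_of_gt hz)).const_mul c
  refine (h1.congr_deriv ?_).hasDerivWithinAt
  field_simp

lemma glasser_sub2_img (c : ℝ) (hc : 0 < c) : (fun z : ℝ => c / z) '' Ioi 0 = Ioi 0 := by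
  ext u; simp only [mem_image, mem_Ioi]
  constructor
  · rintro ⟨z, hz, rfl⟩; positivity
  · intro hu; exact ⟨c / u, by positivity, by field_simp⟩

lemma glasser_sub2_inj (c : ℝ) (hc : 0 < c) : InjOn (fun z : ℝ => c / z) (Ioi 0) := by
  intro a ha b hb hab
  simp only [mem_Ioi] at ha hb
  field_simp at hab
  exact hab.symm

lemma glasser_sub2_eqon (c : ℝ) (hc : 0 < c) :
    EqOn (fun z : ℝ => |(-(c / z ^ 2))| • Real.exp (-((c / z) ^ 2 + c ^ 2 / (c / z) ^ 2)))
      (fun z : ℝ => (c / z ^ 2) * Real.exp (-(z ^ 2 + c ^ 2 / z ^ 2))) (Ioi 0) := by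
  intro z hz
  simp only [mem_Ioi] at hz
  have hpos : (0:ℝ) < c / z ^ 2 := by positivity
  have harg : (c / z) ^ 2 + c ^ 2 / (c / z) ^ 2 = z ^ 2 + c ^ 2 / z ^ 2 := by
    field_simp; ring
  simp only [smul_eq_mul, abs_neg, abs_of_pos hpos, harg]

lemma glasser_sub2 (c : ℝ) (hc : 0 < c) :
    ∫ z in Ioi (0:ℝ), (c / z ^ 2) * Real.exp (-(z ^ 2 + c ^ 2 / z ^ 2))
      = ∫ z in Ioi (0:ℝ), Real.exp (-(z ^ 2 + c ^ 2 / z ^ 2)) := by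
  have key := integral_image_eq_integral_abs_deriv_smul measurableSet_Ioi
    (glasser_sub2_deriv c hc) (glasser_sub2_inj c hc)
    (fun u => Real.exp (-(u ^ 2 + c ^ 2 / u ^ 2)))
  rw [glasser_sub2_img c hc] at key
  rw [key]
  exact setIntegral_congr_fun measurableSet_Ioi (glasser_sub2_eqon c hc).symm

lemma glasser_int2 (c : ℝ) (hc : 0 < c) :
    IntegrableOn (fun z : ℝ => (c / z ^ 2) * Real.exp (-(z ^ 2 + c ^ 2 / z ^ 2))) (Ioi 0) := by
  have hiff := integrableOn_image_iff_integrableOn_abs_deriv_smul measurableSet_Ioi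
    (glasser_sub2_deriv c hc) (glasser_sub2_inj c hc)
    (fun u => Real.exp (-(u ^ 2 + c ^ 2 / u ^ 2)))
  rw [glasser_sub2_img c hc] at hiff
  exact (hiff.mp (glasser_h_integrable c)).congr_fun (glasser_sub2_eqon c hc) measurableSet_Ioi

lemma glasser_sub1 (c : ℝ) (hc : 0 < c) :
    ∫ z in Ioi (0:ℝ), (1 + c / z ^ 2) * Real.exp (-(z - c / z) ^ 2) = Real.sqrt π := by
  have himg : (fun z : ℝ => z - c / z) '' Ioi 0 = univ := by
    ext u; simp only [mem_image, mem_Ioi, mem_univ, iff_true]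
    set s := Real.sqrt (u ^ 2 + 4 * c) with hs
    have hs2 : s ^ 2 = u ^ 2 + 4 * c := Real.sq_sqrt (by positivity)
    have hzpos : 0 < (u + s) / 2 := by
      have h1 : |u| < s := by
        rw [hs, ← Real.sqrt_sq_eq_abs]
        apply Real.sqrt_lt_sqrt (by positivity); linarith
      have := neg_abs_le u
      linarith [abs_lt.1 h1]
    refine ⟨(u + s) / 2, hzpos, ?_⟩
    have hne : u + s ≠ 0 := by intro h; rw [h] at hzpos; simp at hzpos
    field_simp
    nlinarith [hs2]
  have hderiv : ∀ z ∈ Ioi (0:ℝ),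
      HasDerivWithinAt (fun z : ℝ => z - c / z) (1 + c / z ^ 2) (Ioi 0) z := by
    intro z hz
    have h1 : HasDerivAt (fun z : ℝ => c / z) (c * (-(z ^ 2)⁻¹)) z := by
      simpa [div_eq_mul_inv] using (hasDerivAt_inv (ne_of_gt hz)).const_mul c
    have h2 := (hasDerivAt_id z).sub h1
    refine (h2.congr_deriv ?_).hasDerivWithinAt
    field_simp
    ring
  have hinj : InjOn (fun z : ℝ => z - c / z) (Ioi 0) := by
    intro a ha b hb hab
    simp only [mem_Ioi] at ha hb
    field_simp at hab
    have h2 : (a - b) * (a * b + c) = 0 := by linear_combination hab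
    have h3 : (0:ℝ) < a * b + c := by positivity
    rcases mul_eq_zero.mp h2 with h | h
    · linarith
    · linarith
  have key := integral_image_eq_integral_abs_deriv_smul measurableSet_Ioi hderiv hinj
    (fun u => Real.exp (-u ^ 2))
  rw [himg] at key
  have hg : (∫ u : ℝ in univ, Real.exp (-u ^ 2)) = Real.sqrt π := by
    rw [setIntegral_univ]
    simpa using integral_gaussian 1
  rw [← hg, key]
  refine setIntegral_congr_fun measurableSet_Ioi ?_
  intro z hz
  simp only [mem_Ioi] at hz
  have hpos : (0:ℝ) < 1 + c / z ^ 2 := by positivity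
  simp only [smul_eq_mul, abs_of_pos hpos]

lemma glasser (c : ℝ) (hc : 0 < c) :
    ∫ z in Ioi (0:ℝ), Real.exp (-(z ^ 2 + c ^ 2 / z ^ 2))
      = Real.sqrt π / 2 * Real.exp (-(2 * c)) := by
  have hrw : ∀ z ∈ Ioi (0:ℝ), (1 + c / z ^ 2) * Real.exp (-(z - c / z) ^ 2)
      = Real.exp (2 * c) * (Real.exp (-(z ^ 2 + c ^ 2 / z ^ 2))
        + (c / z ^ 2) * Real.exp (-(z ^ 2 + c ^ 2 / z ^ 2))) := by
    intro z hz
    simp only [mem_Ioi] at hz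
    have hsq : -(z - c / z) ^ 2 = 2 * c + -(z ^ 2 + c ^ 2 / z ^ 2) := by
      field_simp; ring
    rw [hsq, Real.exp_add]
    ring
  have hs1 := glasser_sub1 c hc
  rw [setIntegral_congr_fun measurableSet_Ioi hrw] at hs1
  rw [integral_const_mul, integral_add (glasser_h_integrable c) (glasser_int2 c hc),
    glasser_sub2 c hc] at hs1
  have hexp : (0:ℝ) < Real.exp (2 * c) := Real.exp_pos _
  rw [Real.exp_neg]
  field_simp at hs1 ⊢
  linarith

/-- The error function erf(x) = (2/√π) ∫₀^x e^{-z²} dz. -/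
noncomputable def erf (x : ℝ) : ℝ := (2 / Real.sqrt π) * ∫ z in (0:ℝ)..x, Real.exp (-z ^ 2)

/-- Laplace transform identity:
∫₀^∞ (1 - erf(q/(2√t))) e^{-αt} dt = (1/α) e^{-q√α} for α > 0, q > 0. -/
theorem stmt0 (α q : ℝ) (hα : 0 < α) (hq : 0 < q) :
    ∫ t in Ioi (0:ℝ), (1 - erf (q / (2 * Real.sqrt t))) * Real.exp (-α * t)
      = (1 / α) * Real.exp (-q * Real.sqrt α) := by
  set S : Set (ℝ × ℝ) := {p | 0 < p.2 ∧ q ^ 2 / (4 * p.2 ^ 2) < p.1} with hS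
  have hSmeas : MeasurableSet S := by
    apply MeasurableSet.inter
    · exact measurableSet_lt measurable_const measurable_snd
    · exact measurableSet_lt (measurable_const.div (((measurable_snd.pow_const 2)).const_mul 4))
        measurable_fst
  set F : ℝ × ℝ → ℝ :=
    S.indicator (fun p => (2 / Real.sqrt π) * Real.exp (-p.2 ^ 2) * Real.exp (-α * p.1)) with hF
  -- slices
  have sliceA : ∀ t : ℝ, 0 < t → {z : ℝ | (t, z) ∈ S} = Ioi (q / (2 * Real.sqrt t)) := by
    intro t ht
    have hst : 0 < Real.sqrt t := Real.sqrt_pos.2 ht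
    ext z
    simp only [hS, mem_setOf_eq, mem_Ioi]
    constructor
    · rintro ⟨hz, hlt⟩
      rw [div_lt_iff₀ (by positivity)] at hlt ⊢
      nlinarith [Real.sq_sqrt ht.le, sq_nonneg (q - 2 * z * Real.sqrt t), mul_pos hz hst]
    · intro hlt
      have hz : 0 < z := lt_trans (by positivity) hlt
      refine ⟨hz, ?_⟩
      rw [div_lt_iff₀ (by positivity)] at hlt ⊢
      nlinarith [Real.sq_sqrt ht.le, mul_pos hz hst]
  have sliceB : ∀ z : ℝ, 0 < z → {t : ℝ | (t, z) ∈ S} = Ioi (q ^ 2 / (4 * z ^ 2)) := by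
    intro z hz
    ext t
    simp only [hS, mem_setOf_eq, mem_Ioi]
    exact ⟨fun h => h.2, fun h => ⟨hz, h⟩⟩
  have sliceB' : ∀ z : ℝ, z ≤ 0 → ∀ t : ℝ, F (t, z) = 0 := by
    intro z hz t
    rw [hF, indicator_of_notMem]
    rintro ⟨h1, -⟩
    exact absurd h1 (not_lt.2 hz)
  -- integrability on the product
  have hFint : Integrable F (volume.prod volume) := by
    set G : ℝ × ℝ → ℝ := fun p =>
      (Ioi (0:ℝ)).indicator (fun t => Real.exp (-α * t)) p.1
        * ((2 / Real.sqrt π) * Real.exp (-p.2 ^ 2)) with hG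
    have hind : Integrable ((Ioi (0:ℝ)).indicator fun t => Real.exp (-α * t)) :=
      (integrable_indicator_iff measurableSet_Ioi).2 (exp_neg_integrableOn_Ioi 0 hα)
    have hgauss : Integrable (fun z : ℝ => (2 / Real.sqrt π) * Real.exp (-z ^ 2)) := by
      have h := integrable_exp_neg_mul_sq (b := 1) one_pos
      have := h.const_mul (2 / Real.sqrt π)
      simpa using this
    have hGint : Integrable G (volume.prod volume) := by
      rw [hG]; exact Integrable.mul_prod hind hgauss
    have hb : ∀ p : ℝ × ℝ, ‖F p‖ ≤ G p := by
      intro p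
      rw [Real.norm_eq_abs, hF, hG]
      show |S.indicator _ p| ≤ (Ioi (0:ℝ)).indicator (fun t => Real.exp (-α * t)) p.1
        * ((2 / Real.sqrt π) * Real.exp (-p.2 ^ 2))
      by_cases hp : p ∈ S
      · rw [indicator_of_mem hp]
        obtain ⟨h1, h2⟩ := hp
        have hp1 : 0 < p.1 := lt_trans (by positivity) h2
        rw [indicator_of_mem (mem_Ioi.2 hp1)]
        rw [abs_of_nonneg (by positivity)]
        ring_nf
        exact le_refl _
      · rw [indicator_of_notMem hp, abs_zero]
        apply mul_nonneg _ (by positivity)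
        exact indicator_nonneg (fun t _ => (Real.exp_pos _).le) _
    refine hGint.mono' ?_ (Filter.Eventually.of_forall hb)
    refine (Measurable.aestronglyMeasurable ?_)
    apply Measurable.indicator ?_ hSmeas
    exact (measurable_const.mul ((measurable_snd.pow_const 2).neg.exp)).mul
      ((measurable_fst.const_mul (-α)).exp)
  -- step 1 : rewrite the integrand
  have step1 : ∀ t ∈ Ioi (0:ℝ),
      (1 - erf (q / (2 * Real.sqrt t))) * Real.exp (-α * t) = ∫ z : ℝ, F (t, z) := by
    intro t ht
    simp only [mem_Ioi] at ht
    have hst : 0 < Real.sqrt t := Real.sqrt_pos.2 ht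
    have hx : 0 ≤ q / (2 * Real.sqrt t) := by positivity
    have hFz : (fun z : ℝ => F (t, z))
        = (Ioi (q / (2 * Real.sqrt t))).indicator
            (fun z => (2 / Real.sqrt π) * Real.exp (-z ^ 2) * Real.exp (-α * t)) := by
      funext z
      rw [hF]
      by_cases hz : (t, z) ∈ S
      · rw [indicator_of_mem hz, indicator_of_mem (by rw [← sliceA t ht]; exact hz)]
      · rw [indicator_of_notMem hz, indicator_of_notMem (by rw [← sliceA t ht]; exact hz)]
    rw [hFz, integral_indicator measurableSet_Ioi]
    rw [erf, one_sub_erf _ hx]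
    rw [show (fun z : ℝ => (2 / Real.sqrt π) * Real.exp (-z ^ 2) * Real.exp (-α * t))
        = (fun z : ℝ => ((2 / Real.sqrt π) * Real.exp (-α * t)) * Real.exp (-z ^ 2)) by
      funext z; ring]
    rw [integral_const_mul]
    ring
  -- inner integral over t, for fixed z
  have step2 : ∀ z : ℝ, (∫ t : ℝ, F (t, z))
      = (Ioi (0:ℝ)).indicator (fun z =>
          (2 / Real.sqrt π) * Real.exp (-z ^ 2) * (Real.exp (-α * (q ^ 2 / (4 * z ^ 2))) / α)) z := by
    intro z
    by_cases hz : 0 < z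
    · rw [indicator_of_mem (mem_Ioi.2 hz)]
      have hFt : (fun t : ℝ => F (t, z))
          = (Ioi (q ^ 2 / (4 * z ^ 2))).indicator
              (fun t => ((2 / Real.sqrt π) * Real.exp (-z ^ 2)) * Real.exp (-α * t)) := by
        funext t
        rw [hF]
        by_cases ht : (t, z) ∈ S
        · rw [indicator_of_mem ht, indicator_of_mem (by rw [← sliceB z hz]; exact ht)]

        · rw [indicator_of_notMem ht, indicator_of_notMem (by rw [← sliceB z hz]; exact ht)]
      rw [hFt, integral_indicator measurableSet_Ioi, integral_const_mul, exp_int_Ioi α hα]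
    · rw [indicator_of_notMem (by simpa using hz)]
      simp [sliceB' z (not_lt.1 hz)]
  -- Fubini
  have swap := integral_integral_swap (f := fun t z => F (t, z)) (μ := volume) (ν := volume) hFint
  -- assemble
  rw [setIntegral_congr_fun measurableSet_Ioi step1]
  rw [setIntegral_eq_integral_of_forall_compl_eq_zero (fun t ht => ?_)]
  · rw [swap]
    have : (fun z : ℝ => ∫ t : ℝ, F (t, z))
        = (Ioi (0:ℝ)).indicator (fun z =>
          (2 / Real.sqrt π) * Real.exp (-z ^ 2) * (Real.exp (-α * (q ^ 2 / (4 * z ^ 2))) / α)) := by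
      funext z; exact step2 z
    rw [this, integral_indicator measurableSet_Ioi]
    set c : ℝ := q * Real.sqrt α / 2 with hc
    have hcpos : 0 < c := by positivity
    have hα2 : Real.sqrt α ^ 2 = α := Real.sq_sqrt hα.le
    have hcongr : ∀ z ∈ Ioi (0:ℝ),
        (2 / Real.sqrt π) * Real.exp (-z ^ 2) * (Real.exp (-α * (q ^ 2 / (4 * z ^ 2))) / α)
          = (2 / (Real.sqrt π * α)) * Real.exp (-(z ^ 2 + c ^ 2 / z ^ 2)) := by
      intro z hz
      simp only [mem_Ioi] at hz
      have hzne : z ≠ 0 := ne_of_gt hz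
      have hc2 : c ^ 2 = q ^ 2 * α / 4 := by
        rw [hc, div_pow, mul_pow, hα2]; norm_num
      have h1 : -α * (q ^ 2 / (4 * z ^ 2)) = -(c ^ 2 / z ^ 2) := by
        rw [hc2]; field_simp
      rw [h1, show -(z ^ 2 + c ^ 2 / z ^ 2) = -z ^ 2 + -(c ^ 2 / z ^ 2) by ring, Real.exp_add]
      have hπ : (0:ℝ) < Real.sqrt π := Real.sqrt_pos.2 Real.pi_pos
      field_simp
    rw [setIntegral_congr_fun measurableSet_Ioi hcongr, integral_const_mul, glasser c hcpos]
    have hπ : (0:ℝ) < Real.sqrt π := Real.sqrt_pos.2 Real.pi_pos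
    have h2c : -(2 * c) = -q * Real.sqrt α := by rw [hc]; ring
    rw [h2c]
    field_simp
  · -- t ∉ Ioi 0 : inner integral vanishes
    have : ∀ z : ℝ, F (t, z) = 0 := by
      intro z
      rw [hF, indicator_of_notMem]
      rintro ⟨h1, h2⟩
      simp only [mem_Ioi, not_lt] at ht
      have : (0:ℝ) < q ^ 2 / (4 * z ^ 2) := by positivity
      linarith
    simp [this]
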